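/- Let p be a prime, g ∈ ℤ_p[[z]], and let ℓ be an integer divisible by p. Then every coefficient of the power series (g(z)^ℓ − g(z^p)^{ℓ/p})/ℓ is a p-adic integer. -/

import Mathlib

open PowerSeries Finset

private lemma aux_coeff_pow_char (p : ℕ) [Fact p.Prime] (f : PowerSeries (ZMod p)) (n : ℕ) :
    PowerSeries.coeff n (f ^ p) =
      if p ∣ n then PowerSeries.coeff (n / p) f else 0 := by
  have hp : 0 < p := (Fact.out : p.Prime).pos
  set q := trunc (n + 1) f with hq
  have h1 : PowerSeries.coeff n (f ^ p)
      = PowerSeries.coeff n ((q : PowerSeries (ZMod p)) ^ p) := by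
    rw [← coeff_coe_trunc_of_lt (Nat.lt_succ_self n), ← trunc_trunc_pow f (n + 1) p,
      coeff_coe_trunc_of_lt (Nat.lt_succ_self n)]
  have h2 : (q : PowerSeries (ZMod p)) ^ p = ((q ^ p : Polynomial (ZMod p)) : PowerSeries (ZMod p)) :=
    (Polynomial.coe_pow p).symm
  have h3 : q ^ p = Polynomial.expand (ZMod p) p q := by
    have := Polynomial.map_frobenius_expand (p := p) q
    rwa [ZMod.frobenius_zmod, Polynomial.map_id, eq_comm] at this
  rw [h1, h2, Polynomial.coeff_coe, h3, Polynomial.coeff_expand hp]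
  split_ifs with hd
  · rw [hq, PowerSeries.coeff_trunc, if_pos (lt_of_le_of_lt (Nat.div_le_self n p) (Nat.lt_succ_self n))]
  · rfl

private lemma aux_C_dvd_iff {R : Type*} [CommRing R] (c : R) (f : PowerSeries R) :
    (PowerSeries.C c) ∣ f ↔ ∀ n, c ∣ PowerSeries.coeff n f := by
  constructor
  · rintro ⟨q, rfl⟩ n
    rw [PowerSeries.coeff_C_mul]
    exact Dvd.intro _ rfl
  · intro h
    refine ⟨PowerSeries.mk fun n => (h n).choose, PowerSeries.ext fun n => ?_⟩
    rw [PowerSeries.coeff_C_mul, PowerSeries.coeff_mk]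
    exact (h n).choose_spec

private lemma aux_dvd_pow_sub_pow {R : Type*} [CommRing R] (p : ℕ) (a b : R)
    (h : (p : R) ∣ a - b) : (p : R) * (a - b) ∣ a ^ p - b ^ p := by
  rw [← geom_sum₂_mul a b p]
  refine mul_dvd_mul ?_ dvd_rfl
  have hsum : (∑ i ∈ range p, a ^ i * b ^ (p - 1 - i))
      = (∑ i ∈ range p, (a ^ i - b ^ i) * b ^ (p - 1 - i)) + (p : R) * b ^ (p - 1) := by
    have hb : ∀ i ∈ range p, b ^ i * b ^ (p - 1 - i) = b ^ (p - 1) := by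
      intro i hi
      rw [← pow_add]
      congr 1
      have := mem_range.mp hi
      omega
    simp only [sub_mul]
    rw [Finset.sum_sub_distrib, Finset.sum_congr rfl hb, Finset.sum_const, card_range,
      nsmul_eq_mul]
    ring
  rw [hsum]
  refine dvd_add (Finset.dvd_sum fun i _ => ?_) (Dvd.intro _ rfl)
  exact ((h.trans (sub_dvd_pow_sub_pow a b i)).mul_right _)

private lemma aux_pow_succ_dvd {R : Type*} [CommRing R] (p : ℕ) (a b : R)
    (h : (p : R) ∣ a - b) : ∀ k : ℕ, (p : R) ^ (k + 1) ∣ a ^ p ^ k - b ^ p ^ k := by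
  intro k
  induction k with
  | zero => simpa using h
  | succ k ih =>
    have hd : (p : R) ∣ a ^ p ^ k - b ^ p ^ k :=
      (dvd_pow_self (p : R) (Nat.succ_ne_zero k)).trans ih
    have h2 := aux_dvd_pow_sub_pow p (a ^ p ^ k) (b ^ p ^ k) hd
    have h3 : (p : R) ^ (k + 2) ∣ (p : R) * (a ^ p ^ k - b ^ p ^ k) := by
      rw [pow_succ, mul_comm]
      exact mul_dvd_mul_left _ ih
    have := h3.trans h2
    rwa [← pow_mul, ← pow_mul, ← pow_succ] at this

/-- If `g ∈ ℤ_p[[z]]`, `ℓ = p·ℓ'` with `ℓ ≥ 1`, and `h(z) = g(z^p)`, then every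
coefficient of `g(z)^ℓ − g(z^p)^{ℓ'}` is divisible by `ℓ` (equivalently, the
coefficients of `(g(z)^ℓ − g(z^p)^{ℓ/p})/ℓ` are `p`-adic integers). -/
theorem coeff_pow_sub_pow_div (p : ℕ) [Fact p.Prime] (g h : PowerSeries ℤ_[p])
    (ℓ ℓ' : ℕ) (hℓ : ℓ = p * ℓ') (hℓpos : 1 ≤ ℓ)
    (hh : ∀ n : ℕ, PowerSeries.coeff n h =
      if p ∣ n then PowerSeries.coeff (n / p) g else 0) :
    ∀ n : ℕ, ((ℓ : ℤ_[p])) ∣ PowerSeries.coeff n (g ^ ℓ - h ^ ℓ') := by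
  have hp : p.Prime := Fact.out
  have key : ∀ x : ℤ_[p], (p : ℤ_[p]) ∣ x ↔ PadicInt.toZMod x = 0 := by
    intro x
    rw [← Ideal.mem_span_singleton (α := ℤ_[p]), ← PadicInt.maximalIdeal_eq_span_p,
      ← PadicInt.ker_toZMod, RingHom.mem_ker]
  -- Step 1 : p divides each coefficient of g^p - h
  have step1 : ∀ n : ℕ, (p : ℤ_[p]) ∣ PowerSeries.coeff n (g ^ p - h) := by
    intro n
    rw [key, map_sub, map_sub, sub_eq_zero]
    have hL : PadicInt.toZMod (PowerSeries.coeff n (g ^ p))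
        = PowerSeries.coeff n ((PowerSeries.map PadicInt.toZMod g) ^ p) := by
      rw [← PowerSeries.coeff_map, map_pow]
    rw [hL, aux_coeff_pow_char, hh n]
    split_ifs with hd
    · rw [PowerSeries.coeff_map]
    · simp
  -- set up the valuation decomposition of ℓ'
  have hℓ'pos : ℓ' ≠ 0 := by rintro rfl; omega
  set k := ℓ'.factorization p with hk
  set m := ℓ' / p ^ k with hmdef
  have hm : ℓ' = p ^ k * m := (Nat.ordProj_mul_ordCompl_eq_self ℓ' p).symm
  have hmp : ¬ p ∣ m := Nat.not_dvd_ordCompl hp hℓ'pos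
  -- lift step 1 to divisibility in the power series ring
  have hCp : ((p : ℕ) : PowerSeries ℤ_[p]) ∣ g ^ p - h := by
    rw [← map_natCast (PowerSeries.C (R := ℤ_[p])) p]
    exact (aux_C_dvd_iff _ _).mpr step1
  have h1 : ((p : ℕ) : PowerSeries ℤ_[p]) ^ (k + 1) ∣ (g ^ p) ^ p ^ k - h ^ p ^ k :=
    aux_pow_succ_dvd p _ _ hCp k
  have h2 : ((p : ℕ) : PowerSeries ℤ_[p]) ^ (k + 1) ∣
      ((g ^ p) ^ p ^ k) ^ m - (h ^ p ^ k) ^ m :=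
    h1.trans (sub_dvd_pow_sub_pow _ _ m)
  have h3 : ((g ^ p) ^ p ^ k) ^ m = g ^ ℓ := by
    rw [hℓ, hm, ← pow_mul, ← pow_mul]
  have h4 : (h ^ p ^ k) ^ m = h ^ ℓ' := by rw [← pow_mul, ← hm]
  rw [h3, h4] at h2
  -- extract coefficientwise divisibility by p^(k+1)
  have h5 : ∀ n : ℕ, ((p : ℤ_[p])) ^ (k + 1) ∣ PowerSeries.coeff n (g ^ ℓ - h ^ ℓ') := by
    have : ((p : ℕ) : PowerSeries ℤ_[p]) ^ (k + 1)
        = PowerSeries.C ((p : ℤ_[p]) ^ (k + 1)) := by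
      rw [map_pow, map_natCast]
    rw [this] at h2
    exact (aux_C_dvd_iff _ _).mp h2
  -- m is a unit in ℤ_p
  have hu : IsUnit ((m : ℕ) : ℤ_[p]) := by
    rw [← IsLocalRing.notMem_maximalIdeal, PadicInt.maximalIdeal_eq_span_p,
      Ideal.mem_span_singleton]
    intro hdvd
    rw [key] at hdvd
    rw [map_natCast] at hdvd
    exact hmp ((ZMod.natCast_eq_zero_iff m p).mp hdvd)
  intro n
  have hcast : ((ℓ : ℕ) : ℤ_[p]) = (p : ℤ_[p]) ^ (k + 1) * ((m : ℕ) : ℤ_[p]) := by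
    rw [hℓ, hm]; push_cast; ring
  rw [hcast, hu.mul_right_dvd]
  exact h5 n
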